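/- Under uniform demand with density f(x) = λ for a constant λ > 0 (so F(x) = λ·x), let x*_uni = (1/(λ·H))·(γ_a·V_d·t̄_a/d̄ − (γ_o/γ_t)·V_d − 2·γ_v/γ_t). If 0 ≤ x*_uni ≤ L_x, then the total cost function c attains its minimum over [0, L_x] at x*_uni, i.e., c(x*_uni) ≤ c(x) for all x ∈ [0, L_x]. -/
import Mathlib


/-- Eq. (18): under uniform demand, the flexible route portion x*_uni minimizes
the total cost over [0, L_x] whenever it lies in that interval. -/
theorem uniform_demand_optimal_flexible_portion
    (γt γa γw γo γv ta d H Vd Lx Tl lam : ℝ)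
    (hγt : 0 < γt) (hγa : 0 < γa) (hγw : 0 < γw) (hγo : 0 < γo) (hγv : 0 < γv)
    (hta : 0 < ta) (hd : 0 < d) (hH : 0 < H) (hVd : 0 < Vd) (hLx : 0 < Lx)
    (hTl : 0 ≤ Tl) (hlam : 0 < lam)
    (c : ℝ → ℝ)
    (hc : ∀ x, c x =
      γt * γa * ta * lam * (Lx - x) + γt * γw * lam * Lx * H / 2
      + γt * lam * Lx ^ 2 / (2 * Vd)
      + γt * (lam ^ 2 / 2) * H * (d / Vd) * x ^ 2
      + γo * Lx / H + γo * lam * d * x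
      + (2 * γv / H) * (Lx / Vd + H * (d / Vd) * lam * x + Tl))
    (xuni : ℝ)
    (hxuni : xuni = (1 / (lam * H)) * (γa * Vd * ta / d - (γo / γt) * Vd - 2 * γv / γt))
    (hmem : 0 ≤ xuni ∧ xuni ≤ Lx) :
    ∀ x ∈ Set.Icc (0:ℝ) Lx, c xuni ≤ c x := by
  intro x _
  have key : c x - c xuni
      = γt * (lam ^ 2 / 2) * H * (d / Vd) * (x - xuni) ^ 2 := by
    rw [hc x, hc xuni, hxuni]
    field_simp
    ring
  nlinarith [sq_nonneg (x - xuni), mul_pos (mul_pos (mul_pos hγt (by positivity : (0:ℝ) < lam ^ 2 / 2)) hH) (div_pos hd hVd)]
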